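/- Let E be a real Hilbert space, β > 0, and let f : E → ℝ be nonnegative, convex, and β-smooth. Then for every λ > 0 and every z, w ∈ E, f(w) − (1+λ)·f(z) ≤ (1 + 1/λ)·(β/2)·‖w − z‖². (Lemma C.1.) -/

import Mathlib

open intervalIntegral in
/-- Descent lemma for functions with Lipschitz gradient. -/
lemma descent_aux {E : Type*} [NormedAddCommGroup E] [InnerProductSpace ℝ E] [CompleteSpace E]
    (f : E → ℝ) (g : E → E) (β : ℝ) (hβ : 0 < β)
    (hgrad : ∀ z, HasGradientAt f (g z) z)
    (hglip : ∀ z w, ‖g z - g w‖ ≤ β * ‖z - w‖) (z w : E) :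
    f w ≤ f z + inner ℝ (g z) (w - z) + β / 2 * ‖w - z‖ ^ 2 := by
  set v := w - z with hv
  -- the path
  have hline : ∀ t : ℝ, HasDerivAt (fun s : ℝ => z + s • v) v t := by
    intro t
    simpa using ((hasDerivAt_id t).smul_const v).const_add z
  have hφ : ∀ t : ℝ, HasDerivAt (fun s : ℝ => f (z + s • v))
      (inner ℝ (g (z + t • v)) v : ℝ) t := by
    intro t
    have hf := (hgrad (z + t • v)).hasFDerivAt
    have := hf.comp_hasDerivAt t (hline t)
    exact this
  -- continuity of g
  have hgc : Continuous g := by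
    have : LipschitzWith β.toNNReal g := LipschitzWith.of_dist_le_mul fun a b => by
      rw [Real.coe_toNNReal _ hβ.le]
      simpa [dist_eq_norm] using hglip a b
    exact this.continuous
  have hcont : Continuous fun t : ℝ => (inner ℝ (g (z + t • v)) v : ℝ) := by
    apply Continuous.inner
    · exact hgc.comp (by continuity)
    · exact continuous_const
  -- FTC
  have hFTC : ∫ t in (0:ℝ)..1, (inner ℝ (g (z + t • v)) v : ℝ) = f w - f z := by
    have := intervalIntegral.integral_eq_sub_of_hasDerivAt
      (f := fun s : ℝ => f (z + s • v)) (fun t _ => hφ t)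
      (hcont.intervalIntegrable 0 1)
    simpa [hv] using this
  -- pointwise bound on the integrand
  have hbound : ∀ t ∈ Set.Icc (0:ℝ) 1,
      (inner ℝ (g (z + t • v)) v : ℝ) ≤ inner ℝ (g z) v + β * t * ‖v‖ ^ 2 := by
    intro t ht
    have h1 : (inner ℝ (g (z + t • v)) v : ℝ) - inner ℝ (g z) v
        = inner ℝ (g (z + t • v) - g z) v := by rw [inner_sub_left]
    have h2 : (inner ℝ (g (z + t • v) - g z) v : ℝ) ≤ ‖g (z + t • v) - g z‖ * ‖v‖ :=
      real_inner_le_norm _ _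
    have h3 : ‖g (z + t • v) - g z‖ ≤ β * (t * ‖v‖) := by
      have := hglip (z + t • v) z
      simpa [norm_smul, abs_of_nonneg ht.1, mul_assoc] using this
    nlinarith [norm_nonneg v, mul_le_mul_of_nonneg_right h3 (norm_nonneg v)]
  -- integrate the bound
  have hmono : ∫ t in (0:ℝ)..1, (inner ℝ (g (z + t • v)) v : ℝ)
       ≤ ∫ t in (0:ℝ)..1, (inner ℝ (g z) v + β * t * ‖v‖ ^ 2) := by
    apply intervalIntegral.integral_mono_on (by norm_num)
      (hcont.intervalIntegrable 0 1)
      ((by continuity : Continuous fun t : ℝ =>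
          (inner ℝ (g z) v : ℝ) + β * t * ‖v‖ ^ 2).intervalIntegrable 0 1)
    exact hbound
  have hval : ∫ t in (0:ℝ)..1, ((inner ℝ (g z) v : ℝ) + β * t * ‖v‖ ^ 2)
      = inner ℝ (g z) v + β / 2 * ‖v‖ ^ 2 := by
    have h1 : ∫ t in (0:ℝ)..1, ((inner ℝ (g z) v : ℝ) + β * t * ‖v‖ ^ 2)
        = (∫ _ in (0:ℝ)..1, (inner ℝ (g z) v : ℝ))
          + ∫ t in (0:ℝ)..1, β * t * ‖v‖ ^ 2 := by
      apply intervalIntegral.integral_add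
      · exact intervalIntegrable_const
      · exact (by continuity : Continuous fun t : ℝ =>
          β * t * ‖v‖ ^ 2).intervalIntegrable 0 1
    rw [h1]
    have h2 : ∫ t in (0:ℝ)..1, β * t * ‖v‖ ^ 2
        = (β * ‖v‖ ^ 2) * ∫ t in (0:ℝ)..1, t := by
      rw [← intervalIntegral.integral_const_mul]
      congr 1; ext t; ring
    rw [h2, integral_id]
    norm_num
    ring
  linarith [hFTC ▸ (hval ▸ hmono)]

/-- Lemma C.1.
For a nonnegative, convex, `β`-smooth function `f` on a real Hilbert space,
`f w − (1+λ)·f z ≤ (1 + 1/λ)·(β/2)·‖w − z‖²` for all `λ > 0` and `z, w`. -/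
theorem stmt5 {E : Type*} [NormedAddCommGroup E] [InnerProductSpace ℝ E] [CompleteSpace E]
    (f : E → ℝ) (g : E → E) (β : ℝ) (hβ : 0 < β)
    (hf0 : ∀ z, 0 ≤ f z)
    (hconv : ConvexOn ℝ Set.univ f)
    (hgrad : ∀ z, HasGradientAt f (g z) z)
    (hglip : ∀ z w, ‖g z - g w‖ ≤ β * ‖z - w‖) :
    ∀ lam : ℝ, 0 < lam → ∀ z w : E,
      f w - (1 + lam) * f z ≤ (1 + 1 / lam) * (β / 2) * ‖w - z‖ ^ 2 := by
  intro lam hlam z w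
  -- gradient norm bound: ‖g z‖² ≤ 2 β f z
  have hgb : ‖g z‖ ^ 2 ≤ 2 * β * f z := by
    have h := descent_aux f g β hβ hgrad hglip z (z - β⁻¹ • g z)
    have h1 : z - β⁻¹ • g z - z = -(β⁻¹ • g z) := by abel
    rw [h1] at h
    have h2 : (inner ℝ (g z) (-(β⁻¹ • g z)) : ℝ) = -(β⁻¹ * ‖g z‖ ^ 2) := by
      rw [inner_neg_right, real_inner_smul_right, real_inner_self_eq_norm_sq]
    rw [h2, norm_neg, norm_smul] at h
    have h0 := hf0 (z - β⁻¹ • g z)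
    have hβ' : (0:ℝ) < β⁻¹ := by positivity
    rw [Real.norm_eq_abs, abs_of_pos hβ'] at h
    have key : β / 2 * (β⁻¹ * ‖g z‖) ^ 2 = ‖g z‖ ^ 2 / (2 * β) := by
      field_simp
    rw [key] at h
    have h3 := h0.trans h
    have hββ : β * β⁻¹ = 1 := mul_inv_cancel₀ hβ.ne'
    have hdiv : 2 * β * (‖g z‖ ^ 2 / (2 * β)) = ‖g z‖ ^ 2 := by
      field_simp
    nlinarith [mul_le_mul_of_nonneg_left h3 hβ.le]
  have hd := descent_aux f g β hβ hgrad hglip z w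
  have hcs : (inner ℝ (g z) (w - z) : ℝ) ≤ ‖g z‖ * ‖w - z‖ := real_inner_le_norm _ _
  have hrw : (1 + 1 / lam) * (β / 2) * ‖w - z‖ ^ 2
      = ((lam + 1) * β * ‖w - z‖ ^ 2) / (2 * lam) := by
    rw [eq_div_iff (by positivity)]
    have h1 : (1 + 1 / lam) * lam = lam + 1 := by field_simp
    linear_combination (β * ‖w - z‖ ^ 2) * h1
  rw [hrw, le_div_iff₀ (by positivity)]
  have hstep : 2 * lam * β * f w
      ≤ 2 * lam * β * ((1 + lam) * f z) + (1 + lam) * β ^ 2 * ‖w - z‖ ^ 2 := by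
    nlinarith [sq_nonneg (lam * ‖g z‖ - β * ‖w - z‖),
      mul_le_mul_of_nonneg_left hgb (sq_nonneg lam),
      mul_le_mul_of_nonneg_left hcs (by positivity : (0:ℝ) ≤ 2 * lam * β),
      mul_le_mul_of_nonneg_left hd (by positivity : (0:ℝ) ≤ 2 * lam * β)]
  have hfin : β * ((f w - (1 + lam) * f z) * (2 * lam))
      ≤ β * ((lam + 1) * β * ‖w - z‖ ^ 2) := by nlinarith [hstep]
  exact le_of_mul_le_mul_left hfin hβ
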